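/- Let Γ be a convex lattice polygon in ℝ² with nonempty adjoint Γ' (the convex hull of its interior lattice points), and let h be a nonzero integral linear functional. Then width_Γ(h) = width_{Γ'}(h) + 2 if and only if h is tight for Γ, i.e. max_{v∈Γ} h(v) = max_{w∈Γ'} h(w) + 1 and min_{v∈Γ} h(v) = min_{w∈Γ'} h(w) − 1. -/

import Mathlib

noncomputable section

/-- `p` is a lattice point of `ℤ² ⊂ ℝ²`. -/
def IsLat (p : ℝ × ℝ) : Prop := (∃ m : ℤ, p.1 = m) ∧ (∃ n : ℤ, p.2 = n)

/-- evaluation of the integral linear functional `h` at a point `p`. -/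
def ev (h : ℤ × ℤ) (p : ℝ × ℝ) : ℝ := (h.1 : ℝ) * p.1 + (h.2 : ℝ) * p.2

/-- the maximum of `h` on `Γ`. -/
def maxW (Γ : Set (ℝ × ℝ)) (h : ℤ × ℤ) : ℝ := sSup (ev h '' Γ)

/-- the minimum of `h` on `Γ`. -/
def minW (Γ : Set (ℝ × ℝ)) (h : ℤ × ℤ) : ℝ := sInf (ev h '' Γ)

/-- the width of `Γ` in direction `h`. -/
def width (Γ : Set (ℝ × ℝ)) (h : ℤ × ℤ) : ℝ := maxW Γ h - minW Γ h

/-- the adjoint polygon: convex hull of the interior lattice points of `Γ`. -/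
def adjoint (Γ : Set (ℝ × ℝ)) : Set (ℝ × ℝ) :=
  convexHull ℝ {p | p ∈ interior Γ ∧ IsLat p}

/-- `h` is tight for `Γ` (max-tight and min-tight with respect to the adjoint). -/
def Tight (Γ : Set (ℝ × ℝ)) (h : ℤ × ℤ) : Prop :=
  maxW Γ h = maxW (adjoint Γ) h + 1 ∧ minW Γ h = minW (adjoint Γ) h - 1

/-- the lattice width of `Γ`: minimal width over nonzero integral directions. -/
def latticeWidth (Γ : Set (ℝ × ℝ)) : ℝ := sInf (width Γ '' {h : ℤ × ℤ | h ≠ 0})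

/-- a primitive integral direction. -/
def IsPrimitive (h : ℤ × ℤ) : Prop := Int.gcd h.1 h.2 = 1

/-- the set of optimal (minimal width) nonzero directions of `Γ`. -/
def optimalSet (Γ : Set (ℝ × ℝ)) : Set (ℤ × ℤ) :=
  {h | h ≠ 0 ∧ width Γ h = latticeWidth Γ}

lemma ev_linear (h : ℤ × ℤ) : IsLinearMap ℝ (ev h) := by
  constructor
  · intro x y; simp [ev]; ring
  · intro c x; simp [ev]; ring

lemma hull_le {s : Set (ℝ × ℝ)} {h : ℤ × ℤ} {c : ℝ}
    (hb : ∀ x ∈ s, ev h x ≤ c) : ∀ x ∈ convexHull ℝ s, ev h x ≤ c :=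
  fun x hx => convexHull_min hb (convex_halfSpace_le (ev_linear h) c) hx

lemma hull_ge {s : Set (ℝ × ℝ)} {h : ℤ × ℤ} {c : ℝ}
    (hb : ∀ x ∈ s, c ≤ ev h x) : ∀ x ∈ convexHull ℝ s, c ≤ ev h x :=
  fun x hx => convexHull_min hb (convex_halfSpace_ge (ev_linear h) c) hx

/-- equality `width Γ h = width Γ' h + 2` holds iff `h` is tight for `Γ`. -/
theorem stmt_1 (S : Set (ℝ × ℝ)) (hfin : S.Finite) (hne : S.Nonempty)
    (hlat : ∀ p ∈ S, IsLat p)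
    (Γ : Set (ℝ × ℝ)) (hΓ : Γ = convexHull ℝ S)
    (hint : {p | p ∈ interior Γ ∧ IsLat p}.Nonempty)
    (h : ℤ × ℤ) (hh : h ≠ 0) :
    width Γ h = width (adjoint Γ) h + 2 ↔ Tight Γ h := by
  subst hΓ
  set Γ := convexHull ℝ S with hΓdef
  set T := {p | p ∈ interior Γ ∧ IsLat p} with hTdef
  -- extremizers on S
  obtain ⟨a, haS, hamax1⟩ := Set.Finite.exists_maximalFor (ev h) S hfin hne
  have hamax0 : ∀ x ∈ S, ev h a ≤ ev h x → ev h a = ev h x :=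
    fun x hx hle => le_antisymm hle (hamax1 hx hle)
  obtain ⟨b, hbS, hbmin1⟩ := Set.Finite.exists_minimalFor (ev h) S hfin hne
  have hbmin0 : ∀ x ∈ S, ev h x ≤ ev h b → ev h b = ev h x :=
    fun x hx hle => le_antisymm (hbmin1 hx hle) hle
  have hamax : ∀ x ∈ S, ev h x ≤ ev h a := by
    intro x hx
    by_contra hc; push_neg at hc
    exact hc.ne' (hamax0 x hx hc.le).symm
  have hbmin : ∀ x ∈ S, ev h b ≤ ev h x := by
    intro x hx
    by_contra hc; push_neg at hc
    exact hc.ne' (hbmin0 x hx hc.le)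
  have hmaxΓ : maxW Γ h = ev h a := by
    apply IsGreatest.csSup_eq
    constructor
    · exact ⟨a, subset_convexHull ℝ S haS, rfl⟩
    · rintro x ⟨y, hy, rfl⟩
      exact hull_le hamax y hy
  have hminΓ : minW Γ h = ev h b := by
    apply IsLeast.csInf_eq
    constructor
    · exact ⟨b, subset_convexHull ℝ S hbS, rfl⟩
    · rintro x ⟨y, hy, rfl⟩
      exact hull_ge hbmin y hy
  -- integrality of the extreme values
  obtain ⟨⟨a1, ha1⟩, ⟨a2, ha2⟩⟩ := hlat a haS
  obtain ⟨⟨b1, hb1⟩, ⟨b2, hb2⟩⟩ := hlat b hbS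
  -- h as a real vector
  set d : ℝ × ℝ := ((h.1 : ℝ), (h.2 : ℝ)) with hd
  have hd0 : d ≠ 0 := by
    intro he
    apply hh
    have h1 : (h.1 : ℝ) = 0 := congrArg Prod.fst he
    have h2 : (h.2 : ℝ) = 0 := congrArg Prod.snd he
    exact Prod.ext (by exact_mod_cast h1) (by exact_mod_cast h2)
  have hdpos : (0 : ℝ) < (h.1 : ℝ) * (h.1 : ℝ) + (h.2 : ℝ) * (h.2 : ℝ) := by
    have h12 : (h.1 : ℝ) ≠ 0 ∨ (h.2 : ℝ) ≠ 0 := by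
      by_contra hc; push_neg at hc
      exact hd0 (Prod.ext hc.1 hc.2)
    rcases h12 with h1 | h2
    · nlinarith [mul_self_pos.mpr h1, mul_self_nonneg ((h.2 : ℝ))]
    · nlinarith [mul_self_pos.mpr h2, mul_self_nonneg ((h.1 : ℝ))]
  -- strict bounds for interior points
  have hltmax : ∀ p ∈ T, ev h p < ev h a := by
    intro p hp
    obtain ⟨hpi, _⟩ := hp
    rw [mem_interior_iff_mem_nhds] at hpi
    obtain ⟨ε, hε, hball⟩ := Metric.mem_nhds_iff.mp hpi
    have hdn : 0 < ‖d‖ := norm_pos_iff.mpr hd0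
    set c : ℝ := ε / (2 * ‖d‖) with hc
    have hcpos : 0 < c := by positivity
    have hq : p + c • d ∈ Γ := by
      apply hball
      simp only [Metric.mem_ball, dist_eq_norm, add_sub_cancel_left, norm_smul,
        Real.norm_eq_abs, abs_of_pos hcpos]
      rw [hc]
      rw [div_mul_eq_mul_div, mul_comm (2 : ℝ) ‖d‖, ← div_div, mul_div_assoc,
        div_self hdn.ne', mul_one]
      linarith
    have hqle : ev h (p + c • d) ≤ ev h a := hull_le hamax _ hq
    have hcomp : ev h (p + c • d) =
        ev h p + c * ((h.1 : ℝ) * (h.1 : ℝ) + (h.2 : ℝ) * (h.2 : ℝ)) := by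
      simp [ev, hd]; ring
    nlinarith [mul_pos hcpos hdpos]
  have hltmin : ∀ p ∈ T, ev h b < ev h p := by
    intro p hp
    obtain ⟨hpi, _⟩ := hp
    rw [mem_interior_iff_mem_nhds] at hpi
    obtain ⟨ε, hε, hball⟩ := Metric.mem_nhds_iff.mp hpi
    have hdn : 0 < ‖d‖ := norm_pos_iff.mpr hd0
    set c : ℝ := ε / (2 * ‖d‖) with hc
    have hcpos : 0 < c := by positivity
    have hq : p - c • d ∈ Γ := by
      apply hball
      simp only [Metric.mem_ball, dist_eq_norm, sub_sub_cancel_left, norm_neg, norm_smul,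
        Real.norm_eq_abs, abs_of_pos hcpos]
      rw [hc]
      rw [div_mul_eq_mul_div, mul_comm (2 : ℝ) ‖d‖, ← div_div, mul_div_assoc,
        div_self hdn.ne', mul_one]
      linarith
    have hqle : ev h b ≤ ev h (p - c • d) := hull_ge hbmin _ hq
    have hcomp : ev h (p - c • d) =
        ev h p - c * ((h.1 : ℝ) * (h.1 : ℝ) + (h.2 : ℝ) * (h.2 : ℝ)) := by
      simp [ev, hd]; ring
    nlinarith [mul_pos hcpos hdpos]
  -- integer gap bounds on T
  have hTle : ∀ p ∈ T, ev h p ≤ ev h a - 1 := by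
    intro p hp
    obtain ⟨⟨k1, ek1⟩, ⟨k2, ek2⟩⟩ := hp.2
    have hev : ev h p = ((h.1 * k1 + h.2 * k2 : ℤ) : ℝ) := by
      simp only [ev, ek1, ek2]; push_cast; ring
    have heva : ev h a = ((h.1 * a1 + h.2 * a2 : ℤ) : ℝ) := by
      simp only [ev, ha1, ha2]; push_cast; ring
    have hlt := hltmax p hp
    rw [hev, heva] at hlt ⊢
    have hz : (h.1 * k1 + h.2 * k2 : ℤ) < h.1 * a1 + h.2 * a2 := by exact_mod_cast hlt
    have hz' : (h.1 * k1 + h.2 * k2 : ℤ) ≤ h.1 * a1 + h.2 * a2 - 1 := by omega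
    have := (Int.cast_le (R := ℝ)).mpr hz'
    push_cast at this ⊢
    linarith
  have hTge : ∀ p ∈ T, ev h b + 1 ≤ ev h p := by
    intro p hp
    obtain ⟨⟨k1, ek1⟩, ⟨k2, ek2⟩⟩ := hp.2
    have hev : ev h p = ((h.1 * k1 + h.2 * k2 : ℤ) : ℝ) := by
      simp only [ev, ek1, ek2]; push_cast; ring
    have hevb : ev h b = ((h.1 * b1 + h.2 * b2 : ℤ) : ℝ) := by
      simp only [ev, hb1, hb2]; push_cast; ring
    have hlt := hltmin p hp
    rw [hev, hevb] at hlt ⊢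
    have hz : (h.1 * b1 + h.2 * b2 : ℤ) < h.1 * k1 + h.2 * k2 := by exact_mod_cast hlt
    have hz' : (h.1 * b1 + h.2 * b2 : ℤ) + 1 ≤ h.1 * k1 + h.2 * k2 := by omega
    have := (Int.cast_le (R := ℝ)).mpr hz'
    push_cast at this ⊢
    linarith
  -- bounds for the adjoint
  have hTne' : ((ev h) '' (adjoint Γ)).Nonempty := by
    obtain ⟨p0, hp0⟩ := hint
    exact ⟨ev h p0, ⟨p0, subset_convexHull ℝ T hp0, rfl⟩⟩
  have hmaxA : maxW (adjoint Γ) h ≤ ev h a - 1 := by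
    apply csSup_le hTne'
    rintro x ⟨y, hy, rfl⟩
    exact hull_le hTle y hy
  have hminA : ev h b + 1 ≤ minW (adjoint Γ) h := by
    apply le_csInf hTne'
    rintro x ⟨y, hy, rfl⟩
    exact hull_ge hTge y hy
  -- conclude
  constructor
  · intro hw
    simp only [width] at hw
    constructor
    · rw [hmaxΓ] at *; linarith
    · rw [hminΓ] at *; linarith
  · rintro ⟨ht1, ht2⟩
    simp only [width]
    linarith
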